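/- arXiv:2504.19732 — 3 statements merged into one kernel-verified Lean document; each statement's English description precedes it below -/
import Mathlib

section
/- Let $s<2$ and $A\in\mathbb{R}$, and let $f:(0,\infty)\to[0,\infty)$ be a measurable decreasing function such that $I:=\int_0^\infty \sigma^{-s/2+A-1} f(\sqrt{\sigma})\,d\sigma<\infty$. Then for every $\omega>0$ there exists a constant $C>0$ (depending on $s$, $A$, $\omega$ and $I$) such that for every $r>0$ one has $\int_0^\infty t^{-s/2}(\omega+t)^{A-1} f(\sqrt{\omega+t}\; r)\,dt \le C\, r^{s-2A}$. -/
open MeasureTheory Real Filter Set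
open scoped ENNReal Topology

/-- Let `s < 2` and `A ∈ ℝ`, and let `f : (0,∞) → [0,∞)` be a measurable
decreasing function with `∫_0^∞ σ^(-s/2+A-1) f(√σ) dσ < ∞`. Then for every `ω > 0` there is a
constant `C > 0` such that for every `r > 0`,
`∫_0^∞ t^(-s/2) (ω+t)^(A-1) f(√(ω+t) r) dt ≤ C r^(s-2A)`. -/
theorem integral_estimate_decreasing
    (s A : ℝ) (hs : s < 2) (f : ℝ → ℝ)
    (hf_meas : Measurable f)
    (hf_nonneg : ∀ x : ℝ, 0 < x → 0 ≤ f x)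
    (hf_decr : ∀ x y : ℝ, 0 < x → x ≤ y → f y ≤ f x)
    (hI : ∫⁻ σ in Set.Ioi (0:ℝ),
        ENNReal.ofReal (σ ^ (-s/2 + A - 1) * f (Real.sqrt σ)) < ⊤) :
    ∀ ω : ℝ, 0 < ω → ∃ C : ℝ, 0 < C ∧ ∀ r : ℝ, 0 < r →
      (∫⁻ t in Set.Ioi (0:ℝ),
          ENNReal.ofReal (t ^ (-s/2) * (ω + t) ^ (A - 1) * f (Real.sqrt (ω + t) * r)))
        ≤ ENNReal.ofReal (C * r ^ (s - 2*A)) := by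
  intro ω hω
  set α : ℝ := -s/2 + A with hα
  set g : ℝ → ℝ≥0∞ := fun σ => ENNReal.ofReal (σ ^ (α - 1) * f (Real.sqrt σ)) with hgdef
  have hg_meas : Measurable g := by
    apply Measurable.ennreal_ofReal
    fun_prop
  have hIne : (∫⁻ σ in Set.Ioi (0:ℝ), g σ) ≠ ⊤ := hI.ne
  set I' : ℝ := (∫⁻ σ in Set.Ioi (0:ℝ), g σ).toReal with hI'def
  have hI'nn : 0 ≤ I' := ENNReal.toReal_nonneg
  set c₂ : ℝ := min 1 (2 ^ (1 - α)) with hc₂def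
  have hc₂ : 0 < c₂ := lt_min one_pos (Real.rpow_pos_of_pos two_pos _)
  -- key pointwise bound from the finiteness of the integral
  have key : ∀ x : ℝ, 0 < x → f (Real.sqrt x) ≤ (2 * I' / c₂) * x ^ (-α) := by
    intro x hx
    have hx2 : (0:ℝ) < x / 2 := by linarith
    have hxα : (0:ℝ) < x ^ α := Real.rpow_pos_of_pos hx _
    have hfnn : 0 ≤ f (Real.sqrt x) := hf_nonneg _ (Real.sqrt_pos.mpr hx)
    have hpt : ∀ σ ∈ Set.Ioc (x/2) x,
        ENNReal.ofReal (c₂ * x ^ (α - 1) * f (Real.sqrt x)) ≤ g σ := by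
      intro σ hσ
      have hσpos : 0 < σ := hx2.trans hσ.1
      have hfle : f (Real.sqrt x) ≤ f (Real.sqrt σ) :=
        hf_decr _ _ (Real.sqrt_pos.mpr hσpos) (Real.sqrt_le_sqrt hσ.2)
      have hbase : c₂ * x ^ (α - 1) ≤ σ ^ (α - 1) := by
        rcases le_or_gt α 1 with h1 | h1
        · calc c₂ * x ^ (α - 1) ≤ 1 * x ^ (α - 1) :=
                mul_le_mul_of_nonneg_right (min_le_left _ _) (Real.rpow_nonneg hx.le _)
          _ = x ^ (α - 1) := one_mul _
          _ ≤ σ ^ (α - 1) := Real.rpow_le_rpow_of_nonpos hσpos hσ.2 (by linarith)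
        · have h3 : (x/2) ^ (α - 1) = 2 ^ (1 - α) * x ^ (α - 1) := by
            rw [Real.div_rpow hx.le (by norm_num : (0:ℝ) ≤ 2),
                show (1 - α : ℝ) = -(α - 1) by ring,
                Real.rpow_neg (by norm_num : (0:ℝ) ≤ 2)]
            ring
          calc c₂ * x ^ (α - 1) ≤ 2 ^ (1 - α) * x ^ (α - 1) :=
                mul_le_mul_of_nonneg_right (min_le_right _ _) (Real.rpow_nonneg hx.le _)
          _ = (x/2) ^ (α - 1) := h3.symm
          _ ≤ σ ^ (α - 1) := Real.rpow_le_rpow hx2.le hσ.1.le (by linarith)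
      exact ENNReal.ofReal_le_ofReal
        (mul_le_mul hbase hfle hfnn (Real.rpow_nonneg hσpos.le _))
    have h1 : ENNReal.ofReal (c₂ * x ^ (α - 1) * f (Real.sqrt x)) * ENNReal.ofReal (x - x/2)
        ≤ ∫⁻ σ in Set.Ioc (x/2) x, g σ := by
      have h := setLIntegral_mono' (μ := volume) measurableSet_Ioc hpt
      rwa [setLIntegral_const, Real.volume_Ioc] at h
    have h2 : (∫⁻ σ in Set.Ioc (x/2) x, g σ) ≤ ∫⁻ σ in Set.Ioi (0:ℝ), g σ :=
      lintegral_mono_set (fun σ hσ => hx2.trans hσ.1)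
    have h3 : c₂ * x ^ (α - 1) * f (Real.sqrt x) * (x - x/2) ≤ I' := by
      rw [hI'def, ← ENNReal.ofReal_le_iff_le_toReal hIne]
      calc ENNReal.ofReal (c₂ * x ^ (α-1) * f (Real.sqrt x) * (x - x/2))
          = ENNReal.ofReal (c₂ * x ^ (α-1) * f (Real.sqrt x)) * ENNReal.ofReal (x - x/2) :=
            ENNReal.ofReal_mul (by positivity)
        _ ≤ _ := h1.trans h2
    have hxe : x ^ α = x ^ (α - 1) * x := by
      rw [← Real.rpow_add_one hx.ne' (α - 1)]
      congr 1
      ring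
    have h4 : f (Real.sqrt x) * (c₂ * x ^ α / 2) ≤ I' := by
      calc f (Real.sqrt x) * (c₂ * x ^ α / 2)
          = c₂ * x ^ (α-1) * f (Real.sqrt x) * (x - x/2) := by rw [hxe]; ring
        _ ≤ I' := h3
    have hc2x : (0:ℝ) < c₂ * x ^ α / 2 := by positivity
    rw [Real.rpow_neg hx.le]
    calc f (Real.sqrt x)
        = f (Real.sqrt x) * (c₂ * x ^ α / 2) / (c₂ * x ^ α / 2) := by
          field_simp
      _ ≤ I' / (c₂ * x ^ α / 2) := by gcongr
      _ = 2 * I' / c₂ * (x ^ α)⁻¹ := by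
          field_simp
  -- integrability of t ^ (-s/2) near 0
  have hIntJ : IntegrableOn (fun t : ℝ => t ^ (-s/2)) (Set.Ioc 0 ω) := by
    have h := intervalIntegral.intervalIntegrable_rpow' (a := 0) (b := ω) (show (-1:ℝ) < -s/2 by linarith)
    rwa [intervalIntegrable_iff, Set.uIoc_of_le hω.le] at h
  set J : ℝ := ∫ t in Set.Ioc (0:ℝ) ω, t ^ (-s/2) with hJdef
  have hJnn : 0 ≤ J :=
    setIntegral_nonneg measurableSet_Ioc fun t ht => Real.rpow_nonneg ht.1.le _
  have hJ : (∫⁻ t in Set.Ioc (0:ℝ) ω, ENNReal.ofReal (t ^ (-s/2))) = ENNReal.ofReal J :=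
    (ofReal_integral_eq_lintegral_ofReal hIntJ
      (ae_restrict_of_forall_mem measurableSet_Ioc fun t ht => Real.rpow_nonneg ht.1.le _)).symm
  set K₁ : ℝ := max (ω ^ (A-1)) ((2*ω) ^ (A-1)) with hK₁def
  have hK₁nn : 0 ≤ K₁ := le_max_of_le_left (Real.rpow_nonneg hω.le _)
  have hK₁ : ∀ t ∈ Set.Ioc (0:ℝ) ω, (ω + t) ^ (A-1) ≤ K₁ := by
    intro t ht
    rcases le_or_gt 1 A with h1 | h1
    · refine le_trans ?_ (le_max_right _ _)
      exact Real.rpow_le_rpow (by linarith [ht.1]) (by linarith [ht.2]) (by linarith)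
    · refine le_trans ?_ (le_max_left _ _)
      exact Real.rpow_le_rpow_of_nonpos hω (by linarith [ht.1]) (by linarith)
  set K₂ : ℝ := max 1 (2 ^ (s/2)) with hK₂def
  have hK₂nn : (0:ℝ) ≤ K₂ := le_max_of_le_left zero_le_one
  have hK₂ : ∀ t : ℝ, ω < t → t ^ (-s/2) ≤ K₂ * (ω + t) ^ (-s/2) := by
    intro t ht
    have htpos : 0 < t := hω.trans ht
    rcases le_or_gt s 0 with h1 | h1
    · calc t ^ (-s/2) ≤ (ω + t) ^ (-s/2) :=
            Real.rpow_le_rpow htpos.le (by linarith) (by linarith)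
      _ = 1 * (ω + t) ^ (-s/2) := (one_mul _).symm
      _ ≤ K₂ * (ω + t) ^ (-s/2) :=
            mul_le_mul_of_nonneg_right (le_max_left _ _) (Real.rpow_nonneg (by linarith) _)
    · have h2 : t ^ (-s/2) ≤ ((ω + t)/2) ^ (-s/2) :=
        Real.rpow_le_rpow_of_nonpos (by linarith) (by linarith) (by linarith)
      have h4 : (2:ℝ) ^ (s/2) * 2 ^ (-s/2) = 1 := by
        rw [← Real.rpow_add two_pos, show s/2 + -s/2 = 0 by ring, Real.rpow_zero]
      have h3 : ((ω + t)/2) ^ (-s/2) = 2 ^ (s/2) * (ω + t) ^ (-s/2) := by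
        rw [Real.div_rpow (by linarith : (0:ℝ) ≤ ω + t) (by norm_num : (0:ℝ) ≤ 2),
            div_eq_iff (ne_of_gt (Real.rpow_pos_of_pos two_pos _))]
        linear_combination -((ω + t) ^ (-s/2)) * h4
      calc t ^ (-s/2) ≤ ((ω + t)/2) ^ (-s/2) := h2
        _ = 2 ^ (s/2) * (ω + t) ^ (-s/2) := h3
        _ ≤ K₂ * (ω + t) ^ (-s/2) :=
            mul_le_mul_of_nonneg_right (le_max_right _ _) (Real.rpow_nonneg (by linarith) _)
  have hDnn : (0:ℝ) ≤ 2 * I' / c₂ * ω ^ (-α) :=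
    mul_nonneg (div_nonneg (by linarith) hc₂.le) (Real.rpow_nonneg hω.le _)
  refine ⟨K₁ * (2 * I' / c₂ * ω ^ (-α)) * J + K₂ * I' + 1, by
    have h1 : 0 ≤ K₁ * (2 * I' / c₂ * ω ^ (-α)) * J :=
      mul_nonneg (mul_nonneg hK₁nn hDnn) hJnn
    have h2 : 0 ≤ K₂ * I' := mul_nonneg hK₂nn hI'nn
    linarith, ?_⟩
  intro r hr
  set c : ℝ := r ^ 2 with hcdef
  have hc : (0:ℝ) < c := by positivity
  have hsq : ∀ u : ℝ, 0 ≤ u → Real.sqrt (u * c) = Real.sqrt u * r := by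
    intro u hu
    rw [hcdef, Real.sqrt_mul hu, Real.sqrt_sq hr.le]
  have hcr : ∀ y : ℝ, c ^ y = r ^ (2*y) := by
    intro y
    rw [hcdef, ← Real.rpow_natCast r 2, ← Real.rpow_mul hr.le]
    norm_num
  have hexp : (2:ℝ) * (-α) = s - 2*A := by rw [hα]; ring
  have hcX : c ^ (-α) = r ^ (s - 2*A) := by rw [hcr (-α), hexp]
  have hrX : (0:ℝ) < r ^ (s - 2*A) := Real.rpow_pos_of_pos hr _
  have hfr : 0 ≤ f (Real.sqrt ω * r) :=
    hf_nonneg _ (mul_pos (Real.sqrt_pos.mpr hω) hr)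
  -- piece 1 : the integral over (0, ω]
  have hp1 : (∫⁻ t in Set.Ioc (0:ℝ) ω,
        ENNReal.ofReal (t ^ (-s/2) * (ω + t) ^ (A - 1) * f (Real.sqrt (ω + t) * r)))
      ≤ ENNReal.ofReal (K₁ * f (Real.sqrt ω * r) * J) := by
    calc (∫⁻ t in Set.Ioc (0:ℝ) ω,
          ENNReal.ofReal (t ^ (-s/2) * (ω + t) ^ (A - 1) * f (Real.sqrt (ω + t) * r)))
        ≤ ∫⁻ t in Set.Ioc (0:ℝ) ω,
            ENNReal.ofReal (K₁ * f (Real.sqrt ω * r)) * ENNReal.ofReal (t ^ (-s/2)) := by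
          apply setLIntegral_mono' measurableSet_Ioc
          intro t ht
          have htp : 0 < t := ht.1
          have hωt : 0 < ω + t := by linarith
          have h1 : f (Real.sqrt (ω + t) * r) ≤ f (Real.sqrt ω * r) :=
            hf_decr _ _ (mul_pos (Real.sqrt_pos.mpr hω) hr)
              (mul_le_mul_of_nonneg_right (Real.sqrt_le_sqrt (by linarith)) hr.le)
          have h3 : (ω + t) ^ (A-1) * f (Real.sqrt (ω + t) * r) ≤ K₁ * f (Real.sqrt ω * r) :=
            mul_le_mul (hK₁ t ht) h1
              (hf_nonneg _ (mul_pos (Real.sqrt_pos.mpr hωt) hr)) hK₁nn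
          rw [← ENNReal.ofReal_mul (mul_nonneg hK₁nn hfr)]
          apply ENNReal.ofReal_le_ofReal
          calc t ^ (-s/2) * (ω + t) ^ (A-1) * f (Real.sqrt (ω + t) * r)
              = t ^ (-s/2) * ((ω + t) ^ (A-1) * f (Real.sqrt (ω + t) * r)) := by ring
            _ ≤ t ^ (-s/2) * (K₁ * f (Real.sqrt ω * r)) :=
                mul_le_mul_of_nonneg_left h3 (Real.rpow_nonneg htp.le _)
            _ = K₁ * f (Real.sqrt ω * r) * t ^ (-s/2) := by ring
      _ = ENNReal.ofReal (K₁ * f (Real.sqrt ω * r)) *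
            ∫⁻ t in Set.Ioc (0:ℝ) ω, ENNReal.ofReal (t ^ (-s/2)) :=
          lintegral_const_mul _ (by fun_prop : Measurable fun t : ℝ => ENNReal.ofReal (t ^ (-s/2)))
      _ = ENNReal.ofReal (K₁ * f (Real.sqrt ω * r)) * ENNReal.ofReal J := by rw [hJ]
      _ = ENNReal.ofReal (K₁ * f (Real.sqrt ω * r) * J) :=
          (ENNReal.ofReal_mul (mul_nonneg hK₁nn hfr)).symm
  -- bound on f (√ω * r)
  have hfbound : f (Real.sqrt ω * r) ≤ 2 * I' / c₂ * (ω ^ (-α) * r ^ (s - 2*A)) := by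
    have h1 := key (ω * c) (by positivity)
    rw [hsq ω hω.le] at h1
    calc f (Real.sqrt ω * r) ≤ 2 * I' / c₂ * (ω * c) ^ (-α) := h1
      _ = 2 * I' / c₂ * (ω ^ (-α) * r ^ (s - 2*A)) := by
          rw [Real.mul_rpow hω.le hc.le, hcX]
  -- piece 2 : the integral over (ω, ∞)
  set φ : ℝ → ℝ := fun t => c * t + c * ω with hφdef
  have hφmeas : Measurable φ := (measurable_id.const_mul c).add_const _
  have hmap : Measure.map φ volume = ENNReal.ofReal c⁻¹ • volume := by
    have hcomp : φ = (fun u => u + c*ω) ∘ (fun t => c * t) := rfl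
    rw [hcomp, ← Measure.map_map (measurable_add_const (c*ω)) (measurable_const_mul c),
        Real.map_volume_mul_left hc.ne', Measure.map_smul, map_add_right_eq_self,
        abs_of_pos (inv_pos.mpr hc)]
  have hpre : φ ⁻¹' (Set.Ioi (2*(c*ω))) = Set.Ioi ω := by
    ext t
    simp only [Set.mem_preimage, Set.mem_Ioi, hφdef]
    constructor
    · intro h
      by_contra hcon
      push_neg at hcon
      nlinarith
    · intro h
      nlinarith
  have hchg : (∫⁻ t in Set.Ioi ω, g (φ t)) =
      ENNReal.ofReal c⁻¹ * ∫⁻ σ in Set.Ioi (2*(c*ω)), g σ := by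
    rw [← hpre, ← MeasureTheory.lintegral_map hg_meas hφmeas,
        ← Measure.restrict_map hφmeas measurableSet_Ioi, hmap,
        Measure.restrict_smul, lintegral_smul_measure, smul_eq_mul]
  have htail : (∫⁻ σ in Set.Ioi (2*(c*ω)), g σ) ≤ ENNReal.ofReal I' := by
    rw [hI'def, ENNReal.ofReal_toReal hIne]
    exact lintegral_mono_set (Set.Ioi_subset_Ioi (by positivity))
  have hKc : (0:ℝ) ≤ K₂ * c ^ (1-α) := mul_nonneg hK₂nn (Real.rpow_nonneg hc.le _)
  have hp2 : (∫⁻ t in Set.Ioi ω,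
        ENNReal.ofReal (t ^ (-s/2) * (ω + t) ^ (A - 1) * f (Real.sqrt (ω + t) * r)))
      ≤ ENNReal.ofReal (K₂ * I' * r ^ (s - 2*A)) := by
    have hpt2 : ∀ t ∈ Set.Ioi ω,
        ENNReal.ofReal (t ^ (-s/2) * (ω + t) ^ (A - 1) * f (Real.sqrt (ω + t) * r))
          ≤ ENNReal.ofReal (K₂ * c ^ (1-α)) * g (φ t) := by
      intro t ht
      have ht' : ω < t := ht
      have hωt : 0 < ω + t := by linarith
      have hφt : φ t = (ω + t) * c := by rw [hφdef]; ring
      have hsqc : Real.sqrt ((ω + t) * c) = Real.sqrt (ω + t) * r := hsq _ hωt.le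
      have hrpow : ((ω + t) * c) ^ (α-1) = (ω + t) ^ (α-1) * c ^ (α-1) :=
        Real.mul_rpow hωt.le hc.le
      have hgval : g (φ t) =
          ENNReal.ofReal ((ω + t) ^ (α-1) * c ^ (α-1) * f (Real.sqrt (ω + t) * r)) := by
        simp only [hgdef]
        rw [hφt, hrpow, hsqc]
      rw [hgval, ← ENNReal.ofReal_mul hKc]
      apply ENNReal.ofReal_le_ofReal
      have hcc : c ^ (1-α) * c ^ (α-1) = 1 := by
        rw [← Real.rpow_add hc, show (1-α) + (α-1) = 0 by ring, Real.rpow_zero]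
      have h6 : (ω + t) ^ (-s/2) * (ω + t) ^ (A-1) = (ω + t) ^ (α-1) := by
        rw [← Real.rpow_add hωt]
        congr 1
        rw [hα]; ring
      have h5 : t ^ (-s/2) * (ω + t) ^ (A-1) ≤ K₂ * (ω + t) ^ (α-1) := by
        calc t ^ (-s/2) * (ω + t) ^ (A-1)
            ≤ K₂ * (ω + t) ^ (-s/2) * (ω + t) ^ (A-1) :=
              mul_le_mul_of_nonneg_right (hK₂ t ht') (Real.rpow_nonneg hωt.le _)
          _ = K₂ * ((ω + t) ^ (-s/2) * (ω + t) ^ (A-1)) := by ring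
          _ = K₂ * (ω + t) ^ (α-1) := by rw [h6]
      have h7 : t ^ (-s/2) * (ω + t) ^ (A-1) * f (Real.sqrt (ω + t) * r)
          ≤ K₂ * (ω + t) ^ (α-1) * f (Real.sqrt (ω + t) * r) :=
        mul_le_mul_of_nonneg_right h5
          (hf_nonneg _ (mul_pos (Real.sqrt_pos.mpr hωt) hr))
      calc t ^ (-s/2) * (ω + t) ^ (A-1) * f (Real.sqrt (ω + t) * r)
          ≤ K₂ * (ω + t) ^ (α-1) * f (Real.sqrt (ω + t) * r) := h7
        _ = K₂ * c ^ (1-α) * ((ω + t) ^ (α-1) * c ^ (α-1) * f (Real.sqrt (ω + t) * r)) := by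
            linear_combination (K₂ * (ω + t) ^ (α-1) * f (Real.sqrt (ω + t) * r)) * hcc.symm
    have hc1 : c ^ (1-α) * c⁻¹ = r ^ (s - 2*A) := by
      have : c⁻¹ = c ^ (-1:ℝ) := by
        rw [Real.rpow_neg_one]
      rw [this, ← Real.rpow_add hc, show (1-α) + (-1:ℝ) = -α by ring, hcX]
    calc (∫⁻ t in Set.Ioi ω,
          ENNReal.ofReal (t ^ (-s/2) * (ω + t) ^ (A - 1) * f (Real.sqrt (ω + t) * r)))
        ≤ ∫⁻ t in Set.Ioi ω, ENNReal.ofReal (K₂ * c ^ (1-α)) * g (φ t) :=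
          setLIntegral_mono' measurableSet_Ioi hpt2
      _ = ENNReal.ofReal (K₂ * c ^ (1-α)) * ∫⁻ t in Set.Ioi ω, g (φ t) :=
          lintegral_const_mul _ (hg_meas.comp hφmeas)
      _ = ENNReal.ofReal (K₂ * c ^ (1-α)) *
            (ENNReal.ofReal c⁻¹ * ∫⁻ σ in Set.Ioi (2*(c*ω)), g σ) := by rw [hchg]
      _ ≤ ENNReal.ofReal (K₂ * c ^ (1-α)) * (ENNReal.ofReal c⁻¹ * ENNReal.ofReal I') := by
          gcongr
      _ = ENNReal.ofReal (K₂ * c ^ (1-α) * (c⁻¹ * I')) := by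
          rw [← ENNReal.ofReal_mul (le_of_lt (inv_pos.mpr hc)), ← ENNReal.ofReal_mul hKc]
      _ = ENNReal.ofReal (K₂ * I' * r ^ (s - 2*A)) := by
          congr 1
          linear_combination (K₂ * I') * hc1
  -- assemble
  calc (∫⁻ t in Set.Ioi (0:ℝ),
        ENNReal.ofReal (t ^ (-s/2) * (ω + t) ^ (A - 1) * f (Real.sqrt (ω + t) * r)))
      = (∫⁻ t in Set.Ioc (0:ℝ) ω,
          ENNReal.ofReal (t ^ (-s/2) * (ω + t) ^ (A - 1) * f (Real.sqrt (ω + t) * r)))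
        + ∫⁻ t in Set.Ioi ω,
            ENNReal.ofReal (t ^ (-s/2) * (ω + t) ^ (A - 1) * f (Real.sqrt (ω + t) * r)) := by
        rw [← Set.Ioc_union_Ioi_eq_Ioi hω.le,
          lintegral_union measurableSet_Ioi (Set.Ioc_disjoint_Ioi le_rfl)]
    _ ≤ ENNReal.ofReal (K₁ * f (Real.sqrt ω * r) * J)
        + ENNReal.ofReal (K₂ * I' * r ^ (s - 2*A)) := add_le_add hp1 hp2
    _ = ENNReal.ofReal (K₁ * f (Real.sqrt ω * r) * J + K₂ * I' * r ^ (s - 2*A)) :=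
        (ENNReal.ofReal_add (mul_nonneg (mul_nonneg hK₁nn hfr) hJnn)
          (mul_nonneg (mul_nonneg hK₂nn hI'nn) hrX.le)).symm
    _ ≤ ENNReal.ofReal ((K₁ * (2 * I' / c₂ * ω ^ (-α)) * J + K₂ * I' + 1) * r ^ (s - 2*A)) := by
        apply ENNReal.ofReal_le_ofReal
        have h8 : K₁ * J * f (Real.sqrt ω * r)
            ≤ K₁ * J * (2 * I' / c₂ * (ω ^ (-α) * r ^ (s - 2*A))) :=
          mul_le_mul_of_nonneg_left hfbound (mul_nonneg hK₁nn hJnn)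
        nlinarith [hrX]
end

section
/- Let $d\ge1$ and $p\in[1,\infty)$. The set $S_0(\mathbb{R}^d)$ of Schwartz functions $f$ on $\mathbb{R}^d$ such that $\partial^\beta f(0)=0$ for every multi-index $\beta\in\mathbb{N}^d$ is dense in $L^p(\mathbb{R}^d)$. -/
open MeasureTheory Real Filter Set
open scoped ENNReal Topology

section Aux

open Metric Function
open scoped Convolution

variable {G : Type*} [NormedAddCommGroup G] [InnerProductSpace ℝ G] [FiniteDimensional ℝ G]
  [MeasurableSpace G] [BorelSpace G]

/-- A smooth compactly supported function is a Schwartz function. -/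
noncomputable def toSchwartzAux (f : G → ℂ) (hf : ContDiff ℝ ((⊤ : ℕ∞) : WithTop ℕ∞) f) (hsupp : HasCompactSupport f) :
    SchwartzMap G ℂ where
  toFun := f
  smooth' := hf
  decay' := by
    intro k n
    obtain ⟨C, hC⟩ := ((continuous_norm.comp continuous_id).pow k |>.mul
      ((hf.continuous_iteratedFDeriv (m := n) (by exact_mod_cast le_top)).norm)).bounded_above_of_compact_support
      (((hsupp.iteratedFDeriv n).norm).mul_left)
    exact ⟨C, fun x => le_trans (le_abs_self _) (hC x)⟩


end Aux

section Main

open Metric Function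
open scoped Convolution

set_option maxHeartbeats 1000000 in
/-- Let `d ≥ 1` and `p ∈ [1,∞)`. The set `S₀(ℝ^d)` of Schwartz functions all
of whose derivatives vanish at the origin (equivalently, `∂^β f(0) = 0` for every multi-index
`β`) is dense in `L^p(ℝ^d)`: every `g ∈ L^p` can be approximated in the `L^p` norm, to within
any `ε > 0`, by such a Schwartz function. -/
theorem schwartz_vanishing_at_zero_dense_Lp (d : ℕ) (hd : 1 ≤ d) (p : ℝ) (hp : 1 ≤ p)
    (g : EuclideanSpace ℝ (Fin d) → ℂ) (hg : MemLp g (ENNReal.ofReal p) volume)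
    (ε : ℝ) (hε : 0 < ε) :
    ∃ f : SchwartzMap (EuclideanSpace ℝ (Fin d)) ℂ,
      (∀ n : ℕ, iteratedFDeriv ℝ n (⇑f) 0 = 0) ∧
      eLpNorm (g - ⇑f) (ENNReal.ofReal p) volume < ENNReal.ofReal ε := by
  haveI : Nonempty (Fin d) := ⟨⟨0, hd⟩⟩
  set P : ℝ≥0∞ := ENNReal.ofReal p with hP
  have hp0 : (0:ℝ) < p := lt_of_lt_of_le one_pos hp
  have hP0 : P ≠ 0 := by simp [hP, ENNReal.ofReal_eq_zero, not_le, hp0]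
  have hPtop : P ≠ ∞ := ENNReal.ofReal_ne_top
  have hP1 : 1 ≤ P := by rwa [hP, ← ENNReal.ofReal_one, ENNReal.ofReal_le_ofReal_iff hp0.le]
  have hpt : 0 < 1 / P.toReal := by
    have : 0 < P.toReal := by rwa [hP, ENNReal.toReal_ofReal hp0.le]
    positivity
  set ε₀ : ℝ≥0∞ := ENNReal.ofReal (ε/3) with hε₀
  have hε₀0 : ε₀ ≠ 0 := by simp [hε₀, ENNReal.ofReal_eq_zero, not_le]; positivity
  have hε₀pos : 0 < ε₀ := pos_iff_ne_zero.2 hε₀0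
  have hε₀top : ε₀ ≠ ∞ := ENNReal.ofReal_ne_top
  -- Step 1: continuous compactly supported approximation
  obtain ⟨φ, φsupp, hφg, φcont, φmem⟩ :=
    hg.exists_hasCompactSupport_eLpNorm_sub_le hPtop hε₀0
  -- the ambient compact set
  set K₁ : Set (EuclideanSpace ℝ (Fin d)) := cthickening 1 (tsupport φ) with hK₁
  have hK₁c : IsCompact K₁ := φsupp.cthickening
  have hK₁m : MeasurableSet K₁ := isClosed_cthickening.measurableSet
  set V : ℝ≥0∞ := volume K₁ ^ (1 / P.toReal) with hV
  have hVtop : V ≠ ∞ :=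
    ENNReal.rpow_ne_top_of_nonneg hpt.le hK₁c.measure_lt_top.ne
  -- Step 2 : choose ε'
  have htend : Tendsto (fun r : ℝ => ENNReal.ofReal r * V) (𝓝[>] 0) (𝓝 0) := by
    have h1 : Tendsto (fun r : ℝ => ENNReal.ofReal r) (𝓝[>] 0) (𝓝 0) := by
      have := (ENNReal.continuous_ofReal.tendsto 0).mono_left (nhdsWithin_le_nhds (s := Ioi (0:ℝ)))
      simpa using this
    simpa using ENNReal.Tendsto.mul_const h1 (Or.inr hVtop)
  obtain ⟨ε', hε'V, hε'pos⟩ :=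
    ((htend.eventually_lt_const hε₀pos).and self_mem_nhdsWithin).exists
  -- uniform continuity of φ
  have huc : UniformContinuous φ := φsupp.uniformContinuous_of_continuous φcont
  obtain ⟨δ, hδpos, hδ⟩ := Metric.uniformContinuous_iff.1 huc ε' hε'pos
  -- the mollifier
  set ρout : ℝ := min δ 1 with hρout
  have hρoutpos : 0 < ρout := lt_min hδpos one_pos
  set χ : ContDiffBump (0 : EuclideanSpace ℝ (Fin d)) := ⟨ρout/2, ρout, half_pos hρoutpos, half_lt_self hρoutpos⟩
  set h : EuclideanSpace ℝ (Fin d) → ℂ := (χ.normed volume) ⋆[ContinuousLinearMap.lsmul ℝ ℝ, volume] φ with hh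
  have φint : Integrable φ volume := φcont.integrable_of_hasCompactSupport φsupp
  have hsmooth : ContDiff ℝ ((⊤ : ℕ∞) : WithTop ℕ∞) h :=
    χ.hasCompactSupport_normed.contDiff_convolution_left _ χ.contDiff_normed
      φint.locallyIntegrable
  have hhsupp : HasCompactSupport h :=
    χ.hasCompactSupport_normed.convolution _ φsupp
  have hclose : ∀ x : EuclideanSpace ℝ (Fin d), dist (h x) (φ x) ≤ ε' := by
    intro x
    refine ContDiffBump.dist_normed_convolution_le φcont.aestronglyMeasurable ?_
    intro y hy
    refine (hδ ?_).le
    have : dist y x < ρout := by simpa [Metric.mem_ball] using hy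
    exact this.trans_le (min_le_left _ _)
  -- support of h is in K₁
  have hsupph : support h ⊆ K₁ := by
    intro x hx
    have := support_convolution_subset (ContinuousLinearMap.lsmul ℝ ℝ)
      (f := χ.normed volume) (g := φ) (μ := volume) hx
    obtain ⟨a, ha, b, hb, rfl⟩ := this
    rw [χ.support_normed_eq] at ha
    refine mem_cthickening_of_dist_le _ b 1 _ (subset_tsupport _ hb) ?_
    have : dist (a + b) b = ‖a‖ := by simp [dist_eq_norm]
    rw [this]
    have : ‖a - 0‖ < ρout := by simpa [Metric.mem_ball, dist_eq_norm] using ha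
    simp only [sub_zero] at this
    exact (this.trans_le (min_le_right _ _)).le
  -- bound on eLpNorm (φ - h)
  have hφh : eLpNorm (φ - h) P volume < ε₀ := by
    have hb : ∀ x, ‖(φ - h) x‖ ≤ ‖K₁.indicator (fun _ => ε') x‖ := by
      intro x
      by_cases hx : x ∈ K₁
      · rw [indicator_of_mem hx]
        simp only [Pi.sub_apply]
        rw [← dist_eq_norm, Real.norm_eq_abs, abs_of_pos hε'pos, dist_comm]
        exact hclose x
      · rw [indicator_of_notMem hx]
        have h1 : φ x = 0 := image_eq_zero_of_notMem_tsupport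
          (fun hxt => hx (self_subset_cthickening _ hxt))
        have h2 : h x = 0 := by
          by_contra h2
          exact hx (hsupph (mem_support.2 h2))
        simp [Pi.sub_apply, h1, h2]
    calc eLpNorm (φ - h) P volume ≤ eLpNorm (K₁.indicator (fun _ => ε')) P volume :=
          eLpNorm_mono hb
      _ = ‖ε'‖₊ * volume K₁ ^ (1 / P.toReal) := eLpNorm_indicator_const hK₁m hP0 hPtop
      _ = ENNReal.ofReal ε' * V := by
          rw [hV]
          congr 1
          simp [← Real.enorm_eq_ofReal hε'pos.le]
          exact (enorm_eq_nnnorm _).symm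
      _ < ε₀ := hε'V
  -- Step 3: choose r
  have C0 := hhsupp.exists_bound_of_continuous hsmooth.continuous
  obtain ⟨C, hC⟩ := C0
  have hCnn : 0 ≤ C := le_trans (norm_nonneg _) (hC 0)
  have htend2 : Tendsto (fun r : ℝ =>
      (‖C‖₊ : ℝ≥0∞) * (volume (cthickening r ({0} : Set (EuclideanSpace ℝ (Fin d))))) ^ (1 / P.toReal))
      (𝓝[>] 0) (𝓝 0) := by
    have hm : Tendsto (fun r : ℝ => volume (cthickening r ({0} : Set (EuclideanSpace ℝ (Fin d))))) (𝓝[>] 0) (𝓝 0) := by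
      have := tendsto_measure_cthickening (μ := volume) (s := ({0} : Set (EuclideanSpace ℝ (Fin d))))
        ⟨1, one_pos, by
          rw [cthickening_singleton _ zero_le_one]
          exact (isCompact_closedBall _ _).measure_lt_top.ne⟩
      rw [closure_singleton, measure_singleton] at this
      exact this.mono_left nhdsWithin_le_nhds
    have hcont : Tendsto (fun x : ℝ≥0∞ => (‖C‖₊ : ℝ≥0∞) * x ^ (1 / P.toReal)) (𝓝 0) (𝓝 0) :=
      ENNReal.tendsto_const_mul_rpow_nhds_zero_of_pos ENNReal.coe_ne_top hpt
    exact hcont.comp hm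
  obtain ⟨r, hrV, hrpos⟩ :=
    ((htend2.eventually_lt_const hε₀pos).and self_mem_nhdsWithin).exists
  set B : Set (EuclideanSpace ℝ (Fin d)) := cthickening r ({0} : Set (EuclideanSpace ℝ (Fin d))) with hB
  have hBm : MeasurableSet B := isClosed_cthickening.measurableSet
  set ρ : ContDiffBump (0 : EuclideanSpace ℝ (Fin d)) := ⟨r/2, r, half_pos hrpos, half_lt_self hrpos⟩
  set f : EuclideanSpace ℝ (Fin d) → ℂ := fun x => (1 - ρ x) • h x with hf
  have hfsmooth : ContDiff ℝ ((⊤ : ℕ∞) : WithTop ℕ∞) f :=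
    (contDiff_const.sub ρ.contDiff).smul hsmooth
  have hfsupp : HasCompactSupport f := hhsupp.smul_left (f := fun x => 1 - ρ x)
  have hfzero : f =ᶠ[𝓝 (0 : EuclideanSpace ℝ (Fin d))] (fun _ => (0 : ℂ)) := by
    filter_upwards [Metric.closedBall_mem_nhds (0 : EuclideanSpace ℝ (Fin d)) (half_pos hrpos)] with x hx
    rw [hf]
    simp [ρ.one_of_mem_closedBall hx]
  refine ⟨toSchwartzAux f hfsmooth hfsupp, ?_, ?_⟩
  · intro n
    have : iteratedFDeriv ℝ n f 0 = iteratedFDeriv ℝ n (fun _ : EuclideanSpace ℝ (Fin d) => (0:ℂ)) 0 := by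
      simp only [← iteratedFDerivWithin_univ]
      exact ((hfzero.filter_mono nhdsWithin_le_nhds).iteratedFDerivWithin_eq
        hfzero.eq_of_nhds n)
    rw [show (⇑(toSchwartzAux f hfsmooth hfsupp)) = f from rfl, this, iteratedFDeriv_zero_fun]
    rfl
  · -- error bound
    have hhf : eLpNorm (h - f) P volume < ε₀ := by
      have hb : ∀ x, ‖(h - f) x‖ ≤ ‖B.indicator (fun _ => C) x‖ := by
        intro x
        have hdiff : (h - f) x = ρ x • h x := by
          simp only [Pi.sub_apply, hf, sub_smul, one_smul]
          ring_nf
        by_cases hx : x ∈ B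
        · rw [indicator_of_mem hx, hdiff]
          rw [norm_smul]
          calc ‖ρ x‖ * ‖h x‖ ≤ 1 * C := by
                apply mul_le_mul _ (hC x) (norm_nonneg _) zero_le_one
                rw [Real.norm_eq_abs, abs_of_nonneg ρ.nonneg]
                exact ρ.le_one
            _ = C := one_mul C
            _ ≤ ‖C‖ := le_abs_self C
        · rw [indicator_of_notMem hx, hdiff]
          have : ρ x = 0 := by
            apply notMem_support.1
            rw [ρ.support_eq]
            intro hmem
            apply hx
            refine mem_cthickening_of_dist_le x 0 r _ rfl ?_
            exact (by simpa [Metric.mem_ball] using hmem : dist x 0 < r).le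
          simp [this]
      calc eLpNorm (h - f) P volume ≤ eLpNorm (B.indicator (fun _ => C)) P volume :=
            eLpNorm_mono hb
        _ = ‖C‖₊ * volume B ^ (1 / P.toReal) := eLpNorm_indicator_const hBm hP0 hPtop
        _ < ε₀ := hrV
    have hdecomp : g - f = (g - φ) + ((φ - h) + (h - f)) := by
      abel
    have htri : eLpNorm (g - f) P volume ≤
        eLpNorm (g - φ) P volume + (eLpNorm (φ - h) P volume + eLpNorm (h - f) P volume) := by
      rw [hdecomp]
      refine le_trans (eLpNorm_add_le (hg.aestronglyMeasurable.sub φcont.aestronglyMeasurable)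
        (((φcont.aestronglyMeasurable.sub hsmooth.continuous.aestronglyMeasurable)).add
          (hsmooth.continuous.aestronglyMeasurable.sub hfsmooth.continuous.aestronglyMeasurable))
        hP1) ?_
      gcongr
      exact eLpNorm_add_le (φcont.aestronglyMeasurable.sub hsmooth.continuous.aestronglyMeasurable)
        (hsmooth.continuous.aestronglyMeasurable.sub hfsmooth.continuous.aestronglyMeasurable) hP1
    have hfin : eLpNorm (g - f) P volume < ε₀ + (ε₀ + ε₀) := by
      refine lt_of_le_of_lt htri ?_
      exact ENNReal.add_lt_add_of_le_of_lt (ne_top_of_le_ne_top hε₀top hφg) hφg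
        (ENNReal.add_lt_add hφh hhf)
    rw [show (⇑(toSchwartzAux f hfsmooth hfsupp)) = f from rfl]
    refine lt_of_lt_of_le hfin ?_
    rw [hε₀, ← ENNReal.ofReal_add (by positivity) (by positivity),
      ← ENNReal.ofReal_add (by positivity) (by positivity)]
    apply ENNReal.ofReal_le_ofReal
    linarith

end Main
end

section
/- Let $p\in(3/2,3)$, let $s$ satisfy $\frac{3}{p}-1<s<2$, let $\alpha\in\mathbb{R}$ and let $\omega>0$ be such that $\alpha+\frac{\sqrt{\omega}}{4\pi}>0$. Then there exists a constant $C>0$ (depending on $p,s,\alpha,\omega$) such that for every $f\in L^p(\mathbb{R}^3)$ one has $\int_0^\infty t^{-s/2}\,\frac{\left|\int_{\mathbb{R}^3} f(x)\,\mathbb{G}_{\omega+t}(x)\,dx\right|}{\alpha+\frac{\sqrt{\omega+t}}{4\pi}}\,dt \le C\,\|f\|_{L^p(\mathbb{R}^3)}$. (This is the boundedness of the singular coefficient functional $C_s(f)$ on $L^p$.) -/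
open MeasureTheory Real Filter Set
open scoped ENNReal Topology

/-- The Green function of the Helmholtz operator `ω - Δ` on `ℝ³`:
`𝔾_ω(x) = e^{-√ω |x|} / (4π |x|)`. -/
noncomputable def greenFn3 (ω : ℝ) (x : EuclideanSpace ℝ (Fin 3)) : ℝ :=
  Real.exp (-(Real.sqrt ω) * ‖x‖) / (4 * Real.pi * ‖x‖)

local notation "E3" => EuclideanSpace ℝ (Fin 3)

lemma lintegral_fun_norm_E3 (g : ℝ → ℝ≥0∞) (hg : Measurable g) :
    ∫⁻ x : E3, g ‖x‖
      = 3 * volume (Metric.ball (0 : E3) 1)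
        * ∫⁻ y in Set.Ioi (0:ℝ), ENNReal.ofReal (y ^ 2) * g y := by
  have hdim : Module.finrank ℝ E3 = 3 := by
    simp [finrank_euclideanSpace]
  have h1 : ∫⁻ x : ({(0:E3)}ᶜ : Set E3), g ‖x.1‖ ∂(volume.comap Subtype.val)
      = ∫⁻ x : E3, g ‖x‖ := by
    rw [lintegral_subtype_comap (measurableSet_singleton (0:E3)).compl (fun x => g ‖x‖),
      MeasureTheory.restrict_compl_singleton]
  have h2 : ∫⁻ x : ({(0:E3)}ᶜ : Set E3), g ‖x.1‖ ∂(volume.comap Subtype.val)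
      = ∫⁻ z : Metric.sphere (0:E3) 1 × Set.Ioi (0:ℝ), g z.2.1
          ∂((volume : Measure E3).toSphere.prod (.volumeIoiPow (Module.finrank ℝ E3 - 1))) :=
    by
    have := (volume : Measure E3).measurePreserving_homeomorphUnitSphereProd.lintegral_comp_emb
      (Homeomorph.measurableEmbedding _) (fun z => g z.2.1)
    simp only [homeomorphUnitSphereProd_apply_snd_coe] at this
    exact this
  have hgm : Measurable fun z : Metric.sphere (0:E3) 1 × Set.Ioi (0:ℝ) => g z.2.1 :=
    hg.comp (measurable_subtype_coe.comp measurable_snd)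
  have h3 : ∫⁻ z : Metric.sphere (0:E3) 1 × Set.Ioi (0:ℝ), g z.2.1
          ∂((volume : Measure E3).toSphere.prod (.volumeIoiPow (Module.finrank ℝ E3 - 1)))
      = (volume : Measure E3).toSphere Set.univ
          * ∫⁻ y : Set.Ioi (0:ℝ), g y.1 ∂(Measure.volumeIoiPow (Module.finrank ℝ E3 - 1)) := by
    rw [lintegral_prod _ hgm.aemeasurable]
    simp [lintegral_const, mul_comm]
  have h4 : ∫⁻ y : Set.Ioi (0:ℝ), g y.1 ∂(Measure.volumeIoiPow (Module.finrank ℝ E3 - 1))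
      = ∫⁻ y in Set.Ioi (0:ℝ), ENNReal.ofReal (y ^ 2) * g y := by
    rw [hdim, Measure.volumeIoiPow]
    rw [lintegral_withDensity_eq_lintegral_mul (Measure.comap Subtype.val volume)
      (f := fun r : Set.Ioi (0:ℝ) => ENNReal.ofReal (r.1 ^ (3 - 1)))
      (by measurability)
      (show Measurable fun y : Set.Ioi (0:ℝ) => g y.1 from hg.comp measurable_subtype_coe)]
    rw [← lintegral_subtype_comap measurableSet_Ioi (fun y => ENNReal.ofReal (y ^ 2) * g y)]
    rfl
  rw [← h1, h2, h3, h4, (volume : Measure E3).toSphere_apply_univ, hdim]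
  push_cast
  ring

lemma integrableOn_rpow_mul_exp {a r : ℝ} (ha : -1 < a) (hr : 0 < r) :
    IntegrableOn (fun t : ℝ => t ^ a * Real.exp (-(r * t))) (Set.Ioi 0) := by
  have h0 := Real.GammaIntegral_convergent (show 0 < a + 1 by linarith)
  have h1 := (integrableOn_Ioi_comp_mul_left_iff
      (fun x : ℝ => Real.exp (-x) * x ^ (a + 1 - 1)) 0 hr).mpr (by simpa using h0)
  have h2 : IntegrableOn (fun t : ℝ => r ^ a * (t ^ a * Real.exp (-(r * t)))) (Set.Ioi 0) := by
    refine h1.congr_fun (fun t ht => ?_) measurableSet_Ioi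
    beta_reduce
    rw [add_sub_cancel_right, Real.mul_rpow hr.le (le_of_lt ht)]
    ring
  have h3 : IntegrableOn (fun t : ℝ => ((r:ℝ) ^ a)⁻¹ * (r ^ a * (t ^ a * Real.exp (-(r * t)))))
      (Set.Ioi 0) := h2.const_mul ((r : ℝ) ^ a)⁻¹
  refine h3.congr_fun (fun t ht => ?_) measurableSet_Ioi
  beta_reduce
  rw [← mul_assoc, inv_mul_cancel₀ (ne_of_gt (Real.rpow_pos_of_pos hr a)), one_mul]

lemma green_lq (q μ : ℝ) (hq0 : 0 < q) (hq3 : q < 3) (hμ : 0 < μ) :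
    ∫⁻ x : E3, (‖greenFn3 μ x‖₊ : ℝ≥0∞) ^ q
      = 3 * volume (Metric.ball (0 : E3) 1) *
        ENNReal.ofReal (((4 * Real.pi) ^ q)⁻¹ *
          ((1 / (q * Real.sqrt μ)) ^ (3 - q) * Real.Gamma (3 - q))) := by
  have hπ : (0:ℝ) < 4 * Real.pi := by positivity
  have hqμ : (0:ℝ) < q * Real.sqrt μ := by positivity
  set g : ℝ → ℝ≥0∞ :=
    fun r => ENNReal.ofReal ((Real.exp (-(Real.sqrt μ) * r) / (4 * Real.pi * r)) ^ q) with hgdef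
  have hgm : Measurable g := by
    apply Measurable.ennreal_ofReal
    exact (Real.continuous_rpow_const hq0.le).measurable.comp
      ((Real.measurable_exp.comp (measurable_const.mul measurable_id)).div
        (measurable_const.mul measurable_id))
  have hpt : ∀ x : E3, (‖greenFn3 μ x‖₊ : ℝ≥0∞) ^ q = g ‖x‖ := by
    intro x
    have hnn : 0 ≤ greenFn3 μ x := by
      apply div_nonneg (Real.exp_nonneg _)
      positivity
    rw [← enorm_eq_nnnorm, ← ofReal_norm, Real.norm_eq_abs, abs_of_nonneg hnn,
      ENNReal.ofReal_rpow_of_nonneg hnn hq0.le]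
    rfl
  simp_rw [hpt]
  rw [lintegral_fun_norm_E3 g hgm]
  congr 1
  have hcong : ∀ y ∈ Set.Ioi (0:ℝ),
      ENNReal.ofReal (y ^ 2) * g y
        = ENNReal.ofReal (((4 * Real.pi) ^ q)⁻¹ *
            (y ^ ((3 - q) - 1) * Real.exp (-(q * Real.sqrt μ * y)))) := by
    intro y hy
    have hy0 : (0:ℝ) < y := hy
    rw [hgdef, ← ENNReal.ofReal_mul (by positivity)]
    congr 1
    rw [Real.div_rpow (Real.exp_nonneg _) (by positivity),
      ← Real.exp_mul, Real.mul_rpow hπ.le hy0.le]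
    rw [show (3 - q) - 1 = 2 - q by ring, Real.rpow_sub hy0,
      show (y:ℝ) ^ 2 = y ^ (2:ℝ) by rw [← Real.rpow_natCast y 2]; norm_num]
    have : -Real.sqrt μ * y * q = -(q * Real.sqrt μ * y) := by ring
    rw [this]
    field_simp
  rw [setLIntegral_congr_fun measurableSet_Ioi hcong]
  rw [← ofReal_integral_eq_lintegral_ofReal]
  · rw [MeasureTheory.integral_const_mul,
      Real.integral_rpow_mul_exp_neg_mul_Ioi (a := 3 - q) (by linarith) hqμ]
  · exact (integrableOn_rpow_mul_exp (by linarith) hqμ).const_mul _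
  · filter_upwards [ae_restrict_mem measurableSet_Ioi] with y hy
    have : (0:ℝ) < y := hy
    positivity

lemma greenMeas (μ : ℝ) : Measurable (greenFn3 μ) := by
  apply Measurable.div
  · exact Real.measurable_exp.comp (measurable_const.mul measurable_norm)
  · exact measurable_const.mul measurable_norm

lemma holder_green (p q μ : ℝ) (hpq : p.HolderConjugate q) (hq3 : q < 3) (hμ : 0 < μ)
    (f : E3 → ℝ) (hf : MemLp f (ENNReal.ofReal p) volume) :
    |∫ x : E3, f x * greenFn3 μ x| ≤
      (eLpNorm f (ENNReal.ofReal p) volume).toReal *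
        (3 * (volume (Metric.ball (0:E3) 1)).toReal *
          (((4 * Real.pi) ^ q)⁻¹ *
            ((1 / (q * Real.sqrt μ)) ^ (3 - q) * Real.Gamma (3 - q)))) ^ (1/q) := by
  have hp1 : 1 < p := hpq.lt
  have hq0 : 0 < q := hpq.symm.pos
  have hV : volume (Metric.ball (0:E3) 1) ≠ ⊤ := measure_ball_lt_top.ne
  set c : ℝ := ((4 * Real.pi) ^ q)⁻¹ *
      ((1 / (q * Real.sqrt μ)) ^ (3 - q) * Real.Gamma (3 - q)) with hc
  have hc0 : 0 ≤ c := by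
    have h3q : 0 < 3 - q := by linarith
    have := Real.Gamma_pos_of_pos h3q
    positivity
  have hGq : ∫⁻ x : E3, (‖greenFn3 μ x‖₊ : ℝ≥0∞) ^ q
      = ENNReal.ofReal (3 * (volume (Metric.ball (0:E3) 1)).toReal * c) := by
    rw [green_lq q μ hq0 hq3 hμ, ← hc,
      ENNReal.ofReal_mul (show (0:ℝ) ≤ 3 * (volume (Metric.ball (0:E3) 1)).toReal by positivity),
      ENNReal.ofReal_mul (by norm_num : (0:ℝ) ≤ 3), ENNReal.ofReal_toReal hV,
      ENNReal.ofReal_ofNat]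
  -- Hölder
  have hfa : AEMeasurable (fun x : E3 => (‖f x‖₊ : ℝ≥0∞)) volume :=
    hf.aestronglyMeasurable.enorm
  have hga : AEMeasurable (fun x : E3 => (‖greenFn3 μ x‖₊ : ℝ≥0∞)) volume :=
    (greenMeas μ).aestronglyMeasurable.enorm
  have hHold := ENNReal.lintegral_mul_le_Lp_mul_Lq volume hpq hfa hga
  have hstep1 : |∫ x : E3, f x * greenFn3 μ x|
      ≤ (∫⁻ x : E3, (‖f x‖₊ : ℝ≥0∞) * (‖greenFn3 μ x‖₊ : ℝ≥0∞)).toReal := by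
    have := norm_integral_le_lintegral_norm (μ := (volume : Measure E3))
      (f := fun x => f x * greenFn3 μ x)
    rw [Real.norm_eq_abs] at this
    refine this.trans (le_of_eq ?_)
    congr 1
    refine lintegral_congr fun x => ?_
    rw [ofReal_norm, enorm_eq_nnnorm, nnnorm_mul, ENNReal.coe_mul]
  have hPtop : ENNReal.ofReal p ≠ ⊤ := ENNReal.ofReal_ne_top
  have hP0 : ENNReal.ofReal p ≠ 0 := by
    simp [ENNReal.ofReal_eq_zero]; linarith
  have hPval : (ENNReal.ofReal p).toReal = p := ENNReal.toReal_ofReal (by linarith)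
  have heq : (∫⁻ x : E3, (‖f x‖₊ : ℝ≥0∞) ^ p) ^ (1/p)
      = eLpNorm f (ENNReal.ofReal p) volume := by
    simp only [eLpNorm_eq_lintegral_rpow_enorm_toReal hP0 hPtop, hPval, enorm_eq_nnnorm]
  have hRHSne : eLpNorm f (ENNReal.ofReal p) volume ≠ ⊤ := hf.eLpNorm_ne_top
  have hchain : (∫⁻ x : E3, (‖f x‖₊ : ℝ≥0∞) * (‖greenFn3 μ x‖₊ : ℝ≥0∞))
      ≤ eLpNorm f (ENNReal.ofReal p) volume *
        ENNReal.ofReal ((3 * (volume (Metric.ball (0:E3) 1)).toReal * c) ^ (1/q)) := by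
    refine hHold.trans (le_of_eq ?_)
    rw [heq, hGq, ← ENNReal.ofReal_rpow_of_nonneg (by positivity) (by positivity)]
  refine hstep1.trans ?_
  have hne : eLpNorm f (ENNReal.ofReal p) volume *
      ENNReal.ofReal ((3 * (volume (Metric.ball (0:E3) 1)).toReal * c) ^ (1/q)) ≠ ⊤ :=
    ENNReal.mul_ne_top hRHSne ENNReal.ofReal_ne_top
  refine (ENNReal.toReal_mono hne hchain).trans (le_of_eq ?_)
  rw [ENNReal.toReal_mul, ENNReal.toReal_ofReal (by positivity)]

lemma green_factor (q μ : ℝ) (hq0 : 0 < q) (hq3 : q < 3) (hμ : 0 < μ) :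
    (3 * (volume (Metric.ball (0:E3) 1)).toReal *
      (((4 * Real.pi) ^ q)⁻¹ * ((1 / (q * Real.sqrt μ)) ^ (3 - q) * Real.Gamma (3 - q)))) ^ (1/q)
    = (3 * (volume (Metric.ball (0:E3) 1)).toReal *
        (((4 * Real.pi) ^ q)⁻¹ * ((1/q) ^ (3 - q) * Real.Gamma (3 - q)))) ^ (1/q)
      * μ ^ (-((3 - q)/(2*q))) := by
  have hΓ : 0 < Real.Gamma (3 - q) := Real.Gamma_pos_of_pos (by linarith)
  have hsμ : 0 < Real.sqrt μ := Real.sqrt_pos.mpr hμ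
  have h1 : (1 / (q * Real.sqrt μ)) ^ (3 - q)
      = (1/q) ^ (3 - q) * Real.sqrt μ ^ (-(3 - q)) := by
    rw [show 1/(q * Real.sqrt μ) = (1/q) * (Real.sqrt μ)⁻¹ by field_simp,
      Real.mul_rpow (by positivity) (by positivity),
      Real.inv_rpow hsμ.le, ← Real.rpow_neg hsμ.le]
  have h2 : Real.sqrt μ ^ (-(3 - q)) = μ ^ (-((3 - q)/2)) := by
    rw [Real.sqrt_eq_rpow, ← Real.rpow_mul hμ.le]
    congr 1; ring
  rw [show 3 * (volume (Metric.ball (0:E3) 1)).toReal *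
      (((4 * Real.pi) ^ q)⁻¹ * ((1 / (q * Real.sqrt μ)) ^ (3 - q) * Real.Gamma (3 - q)))
      = (3 * (volume (Metric.ball (0:E3) 1)).toReal *
        (((4 * Real.pi) ^ q)⁻¹ * ((1/q) ^ (3 - q) * Real.Gamma (3 - q)))) * μ ^ (-((3 - q)/2))
      from by rw [h1, h2]; ring]
  rw [Real.mul_rpow (by positivity) (by positivity), ← Real.rpow_mul hμ.le]
  congr 2; ring

set_option maxHeartbeats 1000000 in
/-- Let `p ∈ (3/2,3)`, `3/p - 1 < s < 2`, `α ∈ ℝ` and `ω > 0` with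
`α + √ω/(4π) > 0`. Then there is `C > 0` such that for every `f ∈ L^p(ℝ³)`,
`∫_0^∞ t^{-s/2} |∫ f 𝔾_{ω+t}| / (α + √(ω+t)/(4π)) dt ≤ C ‖f‖_{L^p}`
(boundedness of the singular coefficient functional `C_s(f)` on `L^p`). -/
theorem singular_coefficient_bounded (p s α ω : ℝ)
    (hp₁ : 3/2 < p) (hp₂ : p < 3) (hs₁ : 3/p - 1 < s) (hs₂ : s < 2)
    (hω : 0 < ω) (hα : 0 < α + Real.sqrt ω / (4 * Real.pi)) :
    ∃ C : ℝ, 0 < C ∧ ∀ f : EuclideanSpace ℝ (Fin 3) → ℝ,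
      MemLp f (ENNReal.ofReal p) volume →
      (∫⁻ t in Set.Ioi (0:ℝ),
          ENNReal.ofReal (t ^ (-s/2)
            * |∫ x : EuclideanSpace ℝ (Fin 3), f x * greenFn3 (ω + t) x|
            / (α + Real.sqrt (ω + t) / (4 * Real.pi))))
        ≤ ENNReal.ofReal (C * (eLpNorm f (ENNReal.ofReal p) volume).toReal) := by
  have hπ : (0:ℝ) < Real.pi := Real.pi_pos
  have hp1 : (1:ℝ) < p := by linarith
  set q : ℝ := p / (p - 1) with hqdef
  have hpq : p.HolderConjugate q := Real.HolderConjugate.conjExponent hp1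
  have hq0 : 0 < q := hpq.symm.pos
  have hq1 : 1 < q := hpq.symm.lt
  have hq3 : q < 3 := by
    rw [hqdef, div_lt_iff₀ (by linarith)]; linarith
  have hΓ : 0 < Real.Gamma (3 - q) := Real.Gamma_pos_of_pos (by linarith)
  have hV : (0:ℝ) < (volume (Metric.ball (0:E3) 1)).toReal :=
    ENNReal.toReal_pos (Metric.measure_ball_pos volume 0 one_pos).ne' measure_ball_lt_top.ne
  set K : ℝ := (3 * (volume (Metric.ball (0:E3) 1)).toReal *
      (((4 * Real.pi) ^ q)⁻¹ * ((1/q) ^ (3 - q) * Real.Gamma (3 - q)))) ^ (1/q) with hKdef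
  have hK : 0 < K := by positivity
  have hsω : 0 < Real.sqrt ω := Real.sqrt_pos.mpr hω
  set d : ℝ := α + Real.sqrt ω / (4 * Real.pi) with hddef
  set c₀ : ℝ := min (1/(4 * Real.pi)) (d / Real.sqrt ω) with hc₀def
  have hc₀ : 0 < c₀ := lt_min (by positivity) (div_pos hα hsω)
  -- denominator lower bound
  have hden : ∀ t : ℝ, 0 ≤ t →
      c₀ * Real.sqrt (ω + t) ≤ α + Real.sqrt (ω + t) / (4 * Real.pi) := by
    intro t ht
    have hsωt : Real.sqrt ω ≤ Real.sqrt (ω + t) := Real.sqrt_le_sqrt (by linarith)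
    have hst0 : 0 < Real.sqrt (ω + t) := lt_of_lt_of_le hsω hsωt
    rcases le_or_gt α 0 with hα' | hα'
    · have h1 : c₀ * Real.sqrt (ω + t) ≤ (d / Real.sqrt ω) * Real.sqrt (ω + t) :=
        mul_le_mul_of_nonneg_right (min_le_right _ _) hst0.le
      refine h1.trans ?_
      rw [div_mul_eq_mul_div, div_le_iff₀ hsω]
      have hαm : α * Real.sqrt (ω + t) ≤ α * Real.sqrt ω :=
        mul_le_mul_of_nonpos_left hsωt hα'
      have he : Real.sqrt ω / (4 * Real.pi) * Real.sqrt (ω + t)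
          = Real.sqrt (ω + t) / (4 * Real.pi) * Real.sqrt ω := by ring
      rw [hddef]
      nlinarith [hαm, he]
    · have h1 : c₀ * Real.sqrt (ω + t) ≤ (1/(4 * Real.pi)) * Real.sqrt (ω + t) :=
        mul_le_mul_of_nonneg_right (min_le_left _ _) hst0.le
      have he : (1/(4 * Real.pi)) * Real.sqrt (ω + t) = Real.sqrt (ω + t) / (4 * Real.pi) := by
        ring
      linarith [h1, he]
  -- the majorant
  set b : ℝ := 3/(2*q) with hbdef
  have hb0 : 0 < b := by positivity
  have hinv : 1/p + 1/q = 1 := by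
    have := hpq.inv_add_inv_eq_one
    simpa [one_div] using this
  have h3p : 3/p = 3 * (1/p) := by ring
  have hb_eq : b = 3/2 * (1/q) := by rw [hbdef]; ring
  have hs2b : 1 < s/2 + b := by
    have h1q : 1/q = 1 - 1/p := by linarith
    rw [hb_eq, h1q]
    rw [h3p] at hs₁
    linarith
  have hshalf : s/2 < 1 := by linarith
  set h : ℝ → ℝ := fun t => t ^ (-s/2) * (ω + t) ^ (-b) with hhdef
  have hhcont : ContinuousOn h (Set.Ioi (0:ℝ)) := by
    intro t ht
    have ht0 : (0:ℝ) < t := ht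
    apply ContinuousWithinAt.mul
    · exact (Real.continuousAt_rpow_const t (-s/2) (Or.inl ht0.ne')).continuousWithinAt
    · exact ((Real.continuousAt_rpow_const (ω + t) (-b)
        (Or.inl (by positivity))).comp (by fun_prop)).continuousWithinAt
  have hint : IntegrableOn h (Set.Ioi (0:ℝ)) := by
    rw [← Set.Ioc_union_Ioi_eq_Ioi (zero_le_one : (0:ℝ) ≤ 1)]
    apply IntegrableOn.union
    · -- on Ioc 0 1
      have hbase : IntegrableOn (fun t : ℝ => t ^ (-s/2)) (Set.Ioc (0:ℝ) 1) := by
        have := intervalIntegral.intervalIntegrable_rpow' (show (-1:ℝ) < -s/2 by linarith)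
          (a := 0) (b := 1)
        rw [intervalIntegrable_iff_integrableOn_Ioc_of_le zero_le_one] at this
        exact this
      refine Integrable.mono' (hbase.const_mul (ω ^ (-b)))
        ((hhcont.mono Set.Ioc_subset_Ioi_self).aestronglyMeasurable measurableSet_Ioc) ?_
      filter_upwards [ae_restrict_mem measurableSet_Ioc] with t ht
      have ht0 : 0 < t := ht.1
      rw [Real.norm_eq_abs, abs_of_nonneg (by positivity)]
      have hmono : (ω + t) ^ (-b) ≤ ω ^ (-b) := by
        rw [Real.rpow_neg (by linarith), Real.rpow_neg hω.le]
        exact inv_anti₀ (Real.rpow_pos_of_pos hω _)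
          (Real.rpow_le_rpow hω.le (by linarith) hb0.le)
      calc t ^ (-s/2) * (ω + t) ^ (-b) ≤ t ^ (-s/2) * ω ^ (-b) :=
            mul_le_mul_of_nonneg_left hmono (by positivity)
        _ = ω ^ (-b) * t ^ (-s/2) := by ring
    · -- on Ioi 1
      have hbase : IntegrableOn (fun t : ℝ => t ^ (-(s/2) + -b)) (Set.Ioi (1:ℝ)) :=
        integrableOn_Ioi_rpow_of_lt (by linarith) zero_lt_one
      refine Integrable.mono' hbase
        ((hhcont.mono (Set.Ioi_subset_Ioi zero_le_one)).aestronglyMeasurable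
          measurableSet_Ioi) ?_
      filter_upwards [ae_restrict_mem measurableSet_Ioi] with t ht
      have ht1 : (1:ℝ) < t := ht
      have ht0 : (0:ℝ) < t := by linarith
      rw [Real.norm_eq_abs, abs_of_nonneg (by positivity)]
      have hmono : (ω + t) ^ (-b) ≤ t ^ (-b) := by
        rw [Real.rpow_neg (by linarith), Real.rpow_neg ht0.le]
        exact inv_anti₀ (Real.rpow_pos_of_pos ht0 _)
          (Real.rpow_le_rpow ht0.le (by linarith) hb0.le)
      calc t ^ (-s/2) * (ω + t) ^ (-b) ≤ t ^ (-s/2) * t ^ (-b) :=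
            mul_le_mul_of_nonneg_left hmono (by positivity)
        _ = t ^ (-(s/2) + -b) := by
            rw [← Real.rpow_add ht0]; ring_nf
  set J : ℝ := ∫ t in Set.Ioi (0:ℝ), h t with hJdef
  have hJ0 : 0 ≤ J := by
    apply setIntegral_nonneg measurableSet_Ioi
    intro t ht
    have ht0 : (0:ℝ) < t := ht
    positivity
  refine ⟨K / c₀ * J + 1, by positivity, ?_⟩
  intro f hf
  set M : ℝ := (eLpNorm f (ENNReal.ofReal p) volume).toReal with hMdef
  have hM0 : 0 ≤ M := ENNReal.toReal_nonneg
  have hmain : ∀ t ∈ Set.Ioi (0:ℝ),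
      ENNReal.ofReal (t ^ (-s/2)
          * |∫ x : E3, f x * greenFn3 (ω + t) x|
          / (α + Real.sqrt (ω + t) / (4 * Real.pi)))
        ≤ ENNReal.ofReal (M * K / c₀ * h t) := by
    intro t ht
    have ht0 : (0:ℝ) < t := ht
    have hωt : 0 < ω + t := by linarith
    apply ENNReal.ofReal_le_ofReal
    have hnum : |∫ x : E3, f x * greenFn3 (ω + t) x|
        ≤ M * (K * (ω + t) ^ (-((3 - q)/(2*q)))) := by
      have := holder_green p q (ω + t) hpq hq3 hωt f hf
      rw [green_factor q (ω + t) hq0 hq3 hωt] at this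
      calc |∫ x : E3, f x * greenFn3 (ω + t) x|
          ≤ M * ((3 * (volume (Metric.ball (0:E3) 1)).toReal *
              (((4 * Real.pi) ^ q)⁻¹ * ((1/q) ^ (3 - q) * Real.Gamma (3 - q)))) ^ (1/q)
            * (ω + t) ^ (-((3 - q)/(2*q)))) := this
        _ = M * (K * (ω + t) ^ (-((3 - q)/(2*q)))) := by rw [hKdef]
    have hD : c₀ * Real.sqrt (ω + t) ≤ α + Real.sqrt (ω + t) / (4 * Real.pi) :=
      hden t ht0.le
    have hD0 : 0 < c₀ * Real.sqrt (ω + t) := by positivity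
    have hstep : t ^ (-s/2) * |∫ x : E3, f x * greenFn3 (ω + t) x|
          / (α + Real.sqrt (ω + t) / (4 * Real.pi))
        ≤ t ^ (-s/2) * (M * (K * (ω + t) ^ (-((3 - q)/(2*q)))))
          / (c₀ * Real.sqrt (ω + t)) := by
      apply div_le_div₀ (by positivity) ?_ hD0 hD
      exact mul_le_mul_of_nonneg_left hnum (by positivity)
    refine hstep.trans (le_of_eq ?_)
    rw [Real.sqrt_eq_rpow]
    rw [show t ^ (-s/2) * (M * (K * (ω + t) ^ (-((3 - q)/(2*q)))))
          / (c₀ * (ω + t) ^ ((1:ℝ)/2))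
        = M * K / c₀ * (t ^ (-s/2) *
            ((ω + t) ^ (-((3 - q)/(2*q))) / (ω + t) ^ ((1:ℝ)/2))) from by ring]
    rw [← Real.rpow_sub hωt, hhdef]
    congr 2
    rw [hbdef]
    field_simp
    ring
  calc (∫⁻ t in Set.Ioi (0:ℝ),
          ENNReal.ofReal (t ^ (-s/2)
            * |∫ x : E3, f x * greenFn3 (ω + t) x|
            / (α + Real.sqrt (ω + t) / (4 * Real.pi))))
      ≤ ∫⁻ t in Set.Ioi (0:ℝ), ENNReal.ofReal (M * K / c₀ * h t) :=
        setLIntegral_mono' measurableSet_Ioi hmain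
    _ = ENNReal.ofReal (M * K / c₀) * ∫⁻ t in Set.Ioi (0:ℝ), ENNReal.ofReal (h t) := by
        simp_rw [ENNReal.ofReal_mul (show (0:ℝ) ≤ M * K / c₀ by positivity)]
        rw [lintegral_const_mul' _ _ ENNReal.ofReal_ne_top]
    _ = ENNReal.ofReal (M * K / c₀) * ENNReal.ofReal J := by
        rw [hJdef, ofReal_integral_eq_lintegral_ofReal hint ?_]
        filter_upwards [ae_restrict_mem measurableSet_Ioi] with t ht
        have ht0 : (0:ℝ) < t := ht
        positivity
    _ ≤ ENNReal.ofReal ((K / c₀ * J + 1) * M) := by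
        rw [← ENNReal.ofReal_mul (by positivity)]
        apply ENNReal.ofReal_le_ofReal
        have he : M * K / c₀ * J = K / c₀ * J * M := by ring
        linarith [hM0]
end
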